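/- In the setting of the truncated von Mangoldt weight for the function field K: with ν_r(x) = (φ_K(W)·R·Res_{z=1}ζ_K(z)) / (c_φ·q^{deg W·[K:F_q(t)]}) · Λ_{K,R}^2((Wx+α)·L(D)^{−1}), the local factor computation holds: for the weight ω((𝔡_j)_{1≤j≤s}) counting solutions x ∈ (L(D)/L(D−𝔡))^m with 𝔡_j ≤ (Wψ_j(x)+b'_j)+D for mutually independent linear forms ψ_j, one has (a) ω is multiplicative over prime divisors (Chinese Remainder Theorem), (b) ω at a prime ℘ dividing W with nontrivial local divisor data vanishes, and (c) for ℘ ∤ W with exactly one 𝔡_j locally equal to ℘, ω equals 1/N℘, while ω ≤ 1/N℘^2 when ℘^2 divides the product of the local parts. -/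

import Mathlib

open Finset

section GYhelpers

lemma liftVec {R : Type*} [CommRing R] {m : ℕ} (A : Ideal R) (x : Fin m → R ⧸ A) :
    ∃ y : Fin m → R, ∀ i, Ideal.Quotient.mk A (y i) = x i :=
  ⟨fun i => (Ideal.Quotient.mk_surjective (x i)).choose,
   fun i => (Ideal.Quotient.mk_surjective (x i)).choose_spec⟩

lemma factorMkIff {R : Type*} [CommRing R] (A T : Ideal R) (h : A ≤ T) (r : R) :
    Ideal.Quotient.factor (S := A) (T := T) h (Ideal.Quotient.mk A r) = 0 ↔ r ∈ T := by
  rw [Ideal.Quotient.factor_mk, Ideal.Quotient.eq_zero_iff_mem]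

lemma condIff {R : Type*} [CommRing R] {m : ℕ} (A T : Ideal R) (h : A ≤ T)
    (a : Fin m → R) (bb : R) (y : Fin m → R) :
    Ideal.Quotient.factor (S := A) (T := T) h
      ((∑ i, Ideal.Quotient.mk A (a i) * Ideal.Quotient.mk A (y i)) + Ideal.Quotient.mk A bb) = 0
      ↔ (∑ i, a i * y i) + bb ∈ T := by
  simp only [← map_mul, ← map_sum, ← map_add, Ideal.Quotient.factor_mk,
    Ideal.Quotient.eq_zero_iff_mem]

lemma sum_update_mul {k : Type*} [CommRing k] {m : ℕ} (c x : Fin m → k) (i₀ : Fin m) (v : k) :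
    ∑ i, c i * Function.update x i₀ v i = (∑ i, c i * x i) - c i₀ * x i₀ + c i₀ * v := by
  have h : (fun i => c i * Function.update x i₀ v i)
      = Function.update (fun i => c i * x i) i₀ (c i₀ * v) := by
    funext i
    rcases eq_or_ne i i₀ with rfl | hi
    · simp
    · simp [Function.update_of_ne hi]
  rw [h, Finset.sum_update_of_mem (Finset.mem_univ i₀)]
  rw [show (Finset.univ \ {i₀} : Finset (Fin m)) = Finset.univ.erase i₀ by
    rw [Finset.sdiff_singleton_eq_erase]]
  rw [Finset.sum_erase_eq_sub (Finset.mem_univ i₀)]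
  ring

lemma card_lin {k : Type*} [Field k] [Finite k] {m : ℕ} (c : Fin m → k) (dd : k)
    {i₀ : Fin m} (h : c i₀ ≠ 0) :
    Nat.card {x : Fin m → k // (∑ i, c i * x i) + dd = 0} * Nat.card k
      = Nat.card k ^ m := by
  have E : {x : Fin m → k // (∑ i, c i * x i) + dd = 0} × k ≃ (Fin m → k) := by
    refine
      { toFun := fun p => Function.update p.1.1 i₀ p.2
        invFun := fun x => (⟨Function.update x i₀ (x i₀ - ((∑ i, c i * x i) + dd) / c i₀), ?_⟩,
          x i₀)
        left_inv := ?_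
        right_inv := ?_ }
    · rw [sum_update_mul]
      field_simp
      ring
    · rintro ⟨⟨y, hy⟩, u⟩
      have hsum : ∑ i, c i * Function.update y i₀ u i = (∑ i, c i * y i) - c i₀ * y i₀ + c i₀ * u :=
        sum_update_mul c y i₀ u
      have hyy : ∑ i, c i * y i = -dd := by linear_combination hy
      ext i
      · rcases eq_or_ne i i₀ with rfl | hi
        · simp only [Function.update_idem, hsum, hyy, Function.update_self]
          field_simp
          ring
        · simp only [Function.update_idem, Function.update_of_ne hi]
      · simp
    · intro x
      simp [Function.update_idem, Function.update_eq_self]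
  calc Nat.card {x : Fin m → k // (∑ i, c i * x i) + dd = 0} * Nat.card k
      = Nat.card ({x : Fin m → k // (∑ i, c i * x i) + dd = 0} × k) := (Nat.card_prod _ _).symm
    _ = Nat.card (Fin m → k) := Nat.card_congr E
    _ = Nat.card k ^ m := by simp [Nat.card_pi]

lemma exists_sol {k : Type*} [Field k] {m : ℕ} (c₀ c₁ : Fin m → k)
    (hind : ∀ a b : k, (∀ i, a * c₀ i = b * c₁ i) → a = 0 ∧ b = 0) (t₀ t₁ : k) :
    ∃ e : Fin m → k, (∑ i, c₀ i * e i) = t₀ ∧ (∑ i, c₁ i * e i) = t₁ := by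
  have hc₀ : ∃ i₀, c₀ i₀ ≠ 0 := by
    by_contra hc
    push_neg at hc
    have := hind 1 0 (fun i => by rw [hc i, mul_zero, zero_mul])
    exact one_ne_zero this.1
  obtain ⟨i₀, hi₀⟩ := hc₀
  set lam := c₁ i₀ / c₀ i₀ with hlam
  have hd : ∃ i₁, c₁ i₁ - lam * c₀ i₁ ≠ 0 := by
    by_contra hdc
    push_neg at hdc
    have := hind lam 1 (fun i => by
      have h2 : c₁ i = lam * c₀ i := by linear_combination hdc i
      rw [h2, one_mul])
    exact one_ne_zero this.2
  obtain ⟨i₁, hi₁⟩ := hd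
  have hne : i₁ ≠ i₀ := by
    intro hcon
    apply hi₁
    rw [hcon, hlam]
    field_simp
    ring
  set det := c₀ i₀ * c₁ i₁ - c₀ i₁ * c₁ i₀ with hdet
  have hdet0 : det ≠ 0 := by
    have : det = c₀ i₀ * (c₁ i₁ - lam * c₀ i₁) := by
      rw [hdet, hlam]; field_simp
    rw [this]
    exact mul_ne_zero hi₀ hi₁
  refine ⟨fun i => (if i = i₀ then (t₀ * c₁ i₁ - t₁ * c₀ i₁) / det else 0)
    + (if i = i₁ then (t₁ * c₀ i₀ - t₀ * c₁ i₀) / det else 0), ?_, ?_⟩ <;>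
  · simp only [mul_add, Finset.sum_add_distrib, mul_ite, mul_zero,
      Finset.sum_ite_eq' Finset.univ, Finset.mem_univ, if_true]
    field_simp
    ring

lemma card_two {k : Type*} [Field k] [Finite k] {m : ℕ} (c₀ c₁ : Fin m → k) (d₀ d₁ : k)
    (hind : ∀ a b : k, (∀ i, a * c₀ i = b * c₁ i) → a = 0 ∧ b = 0) :
    Nat.card {x : Fin m → k // (∑ i, c₀ i * x i) + d₀ = 0 ∧ (∑ i, c₁ i * x i) + d₁ = 0}
      * Nat.card k ^ 2 ≤ Nat.card k ^ m := by
  obtain ⟨e, he₀, he₁⟩ := exists_sol c₀ c₁ hind 1 0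
  obtain ⟨f, hf₀, hf₁⟩ := exists_sol c₀ c₁ hind 0 1
  set Sol := {x : Fin m → k // (∑ i, c₀ i * x i) + d₀ = 0 ∧ (∑ i, c₁ i * x i) + d₁ = 0}
  have key : ∀ (c : Fin m → k) (x e' f' : Fin m → k) (a bb : k),
      ∑ i, c i * (x i + a * e' i + bb * f' i)
        = (∑ i, c i * x i) + a * (∑ i, c i * e' i) + bb * (∑ i, c i * f' i) := by
    intro c x e' f' a bb
    rw [Finset.mul_sum, Finset.mul_sum, ← Finset.sum_add_distrib, ← Finset.sum_add_distrib]
    exact Finset.sum_congr rfl fun i _ => by ring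
  have inj : Function.Injective
      (fun p : Sol × (k × k) => (fun i => p.1.1 i + p.2.1 * e i + p.2.2 * f i : Fin m → k)) := by
    rintro ⟨⟨x, hx₀, hx₁⟩, a, bb⟩ ⟨⟨y, hy₀, hy₁⟩, a', bb'⟩ hpq
    simp only at hpq
    have hsum0 : ∑ i, c₀ i * (x i + a * e i + bb * f i)
        = ∑ i, c₀ i * (y i + a' * e i + bb' * f i) :=
      Finset.sum_congr rfl fun i _ => by rw [congrFun hpq i]
    have hsum1 : ∑ i, c₁ i * (x i + a * e i + bb * f i)
        = ∑ i, c₁ i * (y i + a' * e i + bb' * f i) :=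
      Finset.sum_congr rfl fun i _ => by rw [congrFun hpq i]
    rw [key, key, he₀, hf₀] at hsum0
    rw [key, key, he₁, hf₁] at hsum1
    have ha : a = a' := by
      have e1 : ∑ i, c₀ i * x i = -d₀ := by linear_combination hx₀
      have e2 : ∑ i, c₀ i * y i = -d₀ := by linear_combination hy₀
      rw [e1, e2] at hsum0
      linear_combination hsum0
    have hb : bb = bb' := by
      have e1 : ∑ i, c₁ i * x i = -d₁ := by linear_combination hx₁
      have e2 : ∑ i, c₁ i * y i = -d₁ := by linear_combination hy₁
      rw [e1, e2] at hsum1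
      linear_combination hsum1
    subst ha; subst hb
    have hxy : x = y := by
      funext i
      have := congrFun hpq i
      linear_combination this
    subst hxy
    rfl
  have hle := Nat.card_le_card_of_injective _ inj
  rw [Nat.card_prod, Nat.card_prod] at hle
  calc Nat.card Sol * Nat.card k ^ 2 = Nat.card Sol * (Nat.card k * Nat.card k) := by ring
    _ ≤ Nat.card (Fin m → k) := hle
    _ = Nat.card k ^ m := by simp [Nat.card_pi]

end GYhelpers


/-- The local density weight of the Goldston–Yıldırım computation:
`ω((𝔡_j)) = #{x mod lcm(𝔡) : 𝔡_j ∣ (W·ψ_j(x) + b'_j) for all j} / N(lcm 𝔡)^m`,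
formulated with ideals `I j` of the coordinate ring in place of the divisors `𝔡_j`
(so `lcm` is the intersection `⨅ j, I j` and `N I = |R/I|`). -/
noncomputable def omegaGY {R : Type*} [CommRing R] (m s : ℕ)
    (ψ : Fin s → Fin m → R) (W : R) (b' : Fin s → R) (I : Fin s → Ideal R) : ℝ :=
  (Nat.card {x : Fin m → R ⧸ (⨅ j, I j) // ∀ j : Fin s,
      Ideal.Quotient.factor (S := ⨅ j', I j') (T := I j) (iInf_le I j)
        ((∑ i, Ideal.Quotient.mk (⨅ j', I j') (W * ψ j i) * x i) +
          Ideal.Quotient.mk (⨅ j', I j') (b' j)) = 0} : ℝ) /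
    ((Nat.card (R ⧸ (⨅ j, I j)) : ℝ)) ^ m

/-!
STATEMENT 13.  Local factor computation underlying the truncated von Mangoldt weight
`ν_r(x) = (φ_K(W)·R·Res ζ_K)/(c_φ q^{deg W·n}) · Λ_{K,R}²((Wx+α)·L(D)^{-1})`.
`R` is the (Dedekind) coordinate ring, all nonzero ideals have finite quotients,
`b'_j = W·b_j + α` with `α` coprime to `W`, and the forms `ψ_j` are mutually
independent.  Conclusions:
(a) `ω` is multiplicative over coprime divisor data (Chinese Remainder Theorem);
(b) at a prime `℘ ∣ W` with nontrivial local data, `ω` vanishes;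
(c) for `℘ ∤ W` (sufficiently large: the forms remain nonzero and pairwise
independent mod `℘`): `ω = 1/N℘` if exactly one local part equals `℘`, and
`ω ≤ 1/N℘²` if `℘²` divides the product of the local parts.
-/
theorem stmt13 {R : Type*} [CommRing R] [IsDomain R] [IsDedekindDomain R]
    (hfin : ∀ I : Ideal R, I ≠ ⊥ → Finite (R ⧸ I))
    (m s : ℕ) (hm : 0 < m) (hs : 0 < s)
    (ψ : Fin s → Fin m → R) (W α : R) (hW : W ≠ 0)
    (b : Fin s → R) (b' : Fin s → R) (hb' : ∀ j, b' j = W * b j + α) :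
    -- (a) multiplicativity over prime divisors (CRT)
    (∀ I I' : Fin s → Ideal R, ((⨅ j, I j) ⊔ (⨅ j, I' j) = ⊤) →
      omegaGY m s ψ W b' (fun j => I j ⊓ I' j) =
        omegaGY m s ψ W b' I * omegaGY m s ψ W b' I') ∧
    -- (b) vanishing at primes dividing W with nontrivial local data
    (∀ ℘ : Ideal R, ℘.IsPrime → ℘ ≠ ⊥ → W ∈ ℘ → α ∉ ℘ →
      ∀ I : Fin s → Ideal R, (∀ j, I j = ⊤ ∨ I j = ℘) → (∃ j, I j = ℘) →
        omegaGY m s ψ W b' I = 0) ∧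
    -- (c) values at primes not dividing W (℘ sufficiently large)
    (∀ ℘ : Ideal R, ℘.IsPrime → ℘ ≠ ⊥ → W ∉ ℘ →
      (∀ j, ∃ i, ψ j i ∉ ℘) →
      (∀ j j', j ≠ j' → ∀ u v : R,
        (∀ i, u * ψ j i - v * ψ j' i ∈ ℘) → u ∈ ℘ ∧ v ∈ ℘) →
      ∀ I : Fin s → Ideal R, (∀ j, I j = ⊤ ∨ I j = ℘) →
        ((∃! j, I j = ℘) →
          omegaGY m s ψ W b' I = 1 / (Nat.card (R ⧸ ℘) : ℝ)) ∧
        ((∃ j j', j ≠ j' ∧ I j = ℘ ∧ I j' = ℘) →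
          omegaGY m s ψ W b' I ≤ 1 / (Nat.card (R ⧸ ℘) : ℝ) ^ 2)) := by
  refine ⟨?_, ?_, ?_⟩
  · intro I I' hco
    have hc : IsCoprime (⨅ j, I j) (⨅ j, I' j) := Ideal.isCoprime_iff_sup_eq.mpr hco
    have hinf : (⨅ j, I j ⊓ I' j) = (⨅ j, I j) ⊓ (⨅ j, I' j) := iInf_inf_eq
    letI e : (R ⧸ (⨅ j, I j ⊓ I' j)) ≃+* (R ⧸ (⨅ j, I j)) × (R ⧸ (⨅ j, I' j)) :=
      (Ideal.quotEquivOfEq hinf).trans (Ideal.quotientInfEquivQuotientProd _ _ hc)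
    have he : ∀ r : R, e (Ideal.Quotient.mk (⨅ j, I j ⊓ I' j) r)
        = (Ideal.Quotient.mk (⨅ j, I j) r, Ideal.Quotient.mk (⨅ j, I' j) r) := by
      intro r
      show (Ideal.quotientInfEquivQuotientProd _ _ hc) ((Ideal.quotEquivOfEq hinf)
        (Ideal.Quotient.mk (⨅ j, I j ⊓ I' j) r)) = _
      rw [Ideal.quotEquivOfEq_mk]
      ext
      · rw [Ideal.quotientInfEquivQuotientProd_fst, Ideal.Quotient.factor_mk]
      · rw [Ideal.quotientInfEquivQuotientProd_snd, Ideal.Quotient.factor_mk]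
    letI base : (Fin m → R ⧸ (⨅ j, I j ⊓ I' j))
        ≃ (Fin m → R ⧸ (⨅ j, I j)) × (Fin m → R ⧸ (⨅ j, I' j)) :=
      (Equiv.piCongrRight fun _ => e.toEquiv).trans (Equiv.arrowProdEquivProdArrow _ _ _)
    have hiff : ∀ x : Fin m → R ⧸ (⨅ j, I j ⊓ I' j),
        (∀ j : Fin s, Ideal.Quotient.factor (S := ⨅ j', I j' ⊓ I' j') (T := I j ⊓ I' j) (iInf_le _ j)
          ((∑ i, Ideal.Quotient.mk (⨅ j', I j' ⊓ I' j') (W * ψ j i) * x i) +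
            Ideal.Quotient.mk (⨅ j', I j' ⊓ I' j') (b' j)) = 0)
        ↔ ((∀ j : Fin s, Ideal.Quotient.factor (S := ⨅ j', I j') (T := I j) (iInf_le I j)
            ((∑ i, Ideal.Quotient.mk (⨅ j', I j') (W * ψ j i) * (base x).1 i) +
              Ideal.Quotient.mk (⨅ j', I j') (b' j)) = 0) ∧
           (∀ j : Fin s, Ideal.Quotient.factor (S := ⨅ j', I' j') (T := I' j) (iInf_le I' j)
            ((∑ i, Ideal.Quotient.mk (⨅ j', I' j') (W * ψ j i) * (base x).2 i) +
              Ideal.Quotient.mk (⨅ j', I' j') (b' j)) = 0)) := by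
      intro x
      obtain ⟨y, hy⟩ := liftVec _ x
      have h1 : (base x).1 = fun i => Ideal.Quotient.mk (⨅ j, I j) (y i) := by
        funext i
        show (e (x i)).1 = _
        rw [← hy i, he]
      have h2 : (base x).2 = fun i => Ideal.Quotient.mk (⨅ j, I' j) (y i) := by
        funext i
        show (e (x i)).2 = _
        rw [← hy i, he]
      rw [h1, h2]
      simp only [← hy, ← map_mul, ← map_sum, ← map_add, factorMkIff]
      rw [← forall_and]
      exact forall_congr' fun j => Submodule.mem_inf
    have hnum : Nat.card {x : Fin m → R ⧸ (⨅ j, I j ⊓ I' j) // ∀ j : Fin s,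
        Ideal.Quotient.factor (S := ⨅ j', I j' ⊓ I' j') (T := I j ⊓ I' j) (iInf_le _ j)
          ((∑ i, Ideal.Quotient.mk (⨅ j', I j' ⊓ I' j') (W * ψ j i) * x i) +
            Ideal.Quotient.mk (⨅ j', I j' ⊓ I' j') (b' j)) = 0}
        = Nat.card {x : Fin m → R ⧸ (⨅ j, I j) // ∀ j : Fin s,
          Ideal.Quotient.factor (S := ⨅ j', I j') (T := I j) (iInf_le I j)
            ((∑ i, Ideal.Quotient.mk (⨅ j', I j') (W * ψ j i) * x i) +
              Ideal.Quotient.mk (⨅ j', I j') (b' j)) = 0}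
        * Nat.card {x : Fin m → R ⧸ (⨅ j, I' j) // ∀ j : Fin s,
          Ideal.Quotient.factor (S := ⨅ j', I' j') (T := I' j) (iInf_le I' j)
            ((∑ i, Ideal.Quotient.mk (⨅ j', I' j') (W * ψ j i) * x i) +
              Ideal.Quotient.mk (⨅ j', I' j') (b' j)) = 0} := by
      rw [← Nat.card_prod]
      exact Nat.card_congr (((base.subtypeEquiv hiff).trans (Equiv.subtypeProdEquivProd)))
    have hden : Nat.card (R ⧸ (⨅ j, I j ⊓ I' j))
        = Nat.card (R ⧸ (⨅ j, I j)) * Nat.card (R ⧸ (⨅ j, I' j)) := by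
      rw [← Nat.card_prod]
      exact Nat.card_congr e.toEquiv
    rw [omegaGY, omegaGY, omegaGY, hnum, hden, Nat.cast_mul, Nat.cast_mul, mul_pow,
      div_mul_div_comm]
  · intro ℘ hp hne hWp hαp I hI ⟨j₀, hj₀⟩
    have hempty : IsEmpty {x : Fin m → R ⧸ (⨅ j, I j) // ∀ j : Fin s,
        Ideal.Quotient.factor (S := ⨅ j', I j') (T := I j) (iInf_le I j)
          ((∑ i, Ideal.Quotient.mk (⨅ j', I j') (W * ψ j i) * x i) +
            Ideal.Quotient.mk (⨅ j', I j') (b' j)) = 0} := by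
      constructor
      rintro ⟨x, hx⟩
      obtain ⟨y, hy⟩ := liftVec (⨅ j, I j) x
      have h1 := hx j₀
      simp only [← hy] at h1
      rw [condIff] at h1
      rw [hj₀] at h1
      have hsum : (∑ i, W * ψ j₀ i * y i) ∈ ℘ :=
        Ideal.sum_mem _ fun i _ => Ideal.mul_mem_right _ _ (Ideal.mul_mem_right _ _ hWp)
      have hbm : W * b j₀ ∈ ℘ := Ideal.mul_mem_right _ _ hWp
      have : α ∈ ℘ := by
        have := Ideal.sub_mem _ (Ideal.sub_mem _ h1 hsum) hbm
        rw [hb' j₀] at this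
        simpa using this
      exact hαp this
    rw [omegaGY, Nat.card_of_isEmpty, Nat.cast_zero, zero_div]
  · intro ℘ hp hne hWp hψ hind I hI
    constructor
    · -- exactly one local part equals ℘
      rintro ⟨j₀, hj₀, huniq⟩
      have hinf : (⨅ j, I j) = ℘ := by
        refine le_antisymm ((iInf_le I j₀).trans_eq hj₀) (le_iInf fun j => ?_)
        rcases hI j with h | h
        · rw [h]; exact le_top
        · rw [h]
      rw [← hinf] at hp hne hWp hψ hind hj₀ ⊢
      haveI : (⨅ j, I j).IsMaximal := hp.isMaximal hne
      letI : Field (R ⧸ (⨅ j, I j)) := Ideal.Quotient.field _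
      haveI : Finite (R ⧸ (⨅ j, I j)) := hfin _ hne
      -- numerator is the solution count of a single nontrivial linear equation
      have hiff : ∀ x : Fin m → R ⧸ (⨅ j, I j),
          (∀ j : Fin s, Ideal.Quotient.factor (S := ⨅ j', I j') (T := I j) (iInf_le I j)
            ((∑ i, Ideal.Quotient.mk (⨅ j', I j') (W * ψ j i) * x i) +
              Ideal.Quotient.mk (⨅ j', I j') (b' j)) = 0)
          ↔ ((∑ i, Ideal.Quotient.mk (⨅ j', I j') (W * ψ j₀ i) * x i) +
              Ideal.Quotient.mk (⨅ j', I j') (b' j₀) = 0) := by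
        intro x
        obtain ⟨y, hy⟩ := liftVec _ x
        simp only [← hy, ← map_mul, ← map_sum, ← map_add, factorMkIff,
          Ideal.Quotient.eq_zero_iff_mem]
        constructor
        · intro hall
          have := hall j₀
          rwa [hj₀] at this
        · intro hone j
          rcases hI j with h | h
          · rw [h]; exact Submodule.mem_top
          · have hj : j = j₀ := huniq j h
            subst hj
            rw [h, ← hinf]
            exact hone
      have hcard := Nat.card_congr (Equiv.subtypeEquivRight hiff)
      -- nonzero coefficient
      obtain ⟨i₀, hi₀⟩ := hψ j₀
      have hc : Ideal.Quotient.mk (⨅ j', I j') (W * ψ j₀ i₀) ≠ 0 := by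
        rw [Ne, Ideal.Quotient.eq_zero_iff_mem]
        intro hmem
        exact (hp.mem_or_mem hmem).elim hWp hi₀
      have hcl := card_lin (fun i => Ideal.Quotient.mk (⨅ j', I j') (W * ψ j₀ i))
        (Ideal.Quotient.mk (⨅ j', I j') (b' j₀)) hc
      rw [omegaGY, hcard]
      have hq : (0 : ℝ) < (Nat.card (R ⧸ (⨅ j, I j)) : ℝ) := by
        exact_mod_cast Nat.card_pos
      have hql : (Nat.card {x : Fin m → R ⧸ (⨅ j, I j) //
          (∑ i, Ideal.Quotient.mk (⨅ j', I j') (W * ψ j₀ i) * x i) +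
            Ideal.Quotient.mk (⨅ j', I j') (b' j₀) = 0} : ℝ)
            * (Nat.card (R ⧸ (⨅ j, I j)) : ℝ)
          = (Nat.card (R ⧸ (⨅ j, I j)) : ℝ) ^ m := by
        exact_mod_cast congrArg (fun n : ℕ => (n : ℝ)) hcl
      rw [div_eq_div_iff (by positivity) hq.ne', one_mul]
      linear_combination hql
    · -- two local parts equal ℘
      rintro ⟨j₀, j₁, hne', hj₀, hj₁⟩
      have hinf : (⨅ j, I j) = ℘ := by
        refine le_antisymm ((iInf_le I j₀).trans_eq hj₀) (le_iInf fun j => ?_)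
        rcases hI j with h | h
        · rw [h]; exact le_top
        · rw [h]
      rw [← hinf] at hp hne hWp hψ hind hj₀ hj₁ ⊢
      haveI : (⨅ j, I j).IsMaximal := hp.isMaximal hne
      letI : Field (R ⧸ (⨅ j, I j)) := Ideal.Quotient.field _
      haveI : Finite (R ⧸ (⨅ j, I j)) := hfin _ hne
      have himp : ∀ x : Fin m → R ⧸ (⨅ j, I j),
          (∀ j : Fin s, Ideal.Quotient.factor (S := ⨅ j', I j') (T := I j) (iInf_le I j)
            ((∑ i, Ideal.Quotient.mk (⨅ j', I j') (W * ψ j i) * x i) +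
              Ideal.Quotient.mk (⨅ j', I j') (b' j)) = 0)
          → (((∑ i, Ideal.Quotient.mk (⨅ j', I j') (W * ψ j₀ i) * x i) +
              Ideal.Quotient.mk (⨅ j', I j') (b' j₀) = 0) ∧
             ((∑ i, Ideal.Quotient.mk (⨅ j', I j') (W * ψ j₁ i) * x i) +
              Ideal.Quotient.mk (⨅ j', I j') (b' j₁) = 0)) := by
        intro x
        obtain ⟨y, hy⟩ := liftVec _ x
        simp only [← hy, ← map_mul, ← map_sum, ← map_add, factorMkIff,
          Ideal.Quotient.eq_zero_iff_mem]
        intro hall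
        exact ⟨hj₀ ▸ hall j₀, hj₁ ▸ hall j₁⟩
      have hcard : Nat.card {x : Fin m → R ⧸ (⨅ j, I j) // ∀ j : Fin s,
          Ideal.Quotient.factor (S := ⨅ j', I j') (T := I j) (iInf_le I j)
            ((∑ i, Ideal.Quotient.mk (⨅ j', I j') (W * ψ j i) * x i) +
              Ideal.Quotient.mk (⨅ j', I j') (b' j)) = 0}
          ≤ Nat.card {x : Fin m → R ⧸ (⨅ j, I j) //
            ((∑ i, Ideal.Quotient.mk (⨅ j', I j') (W * ψ j₀ i) * x i) +
              Ideal.Quotient.mk (⨅ j', I j') (b' j₀) = 0) ∧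
             ((∑ i, Ideal.Quotient.mk (⨅ j', I j') (W * ψ j₁ i) * x i) +
              Ideal.Quotient.mk (⨅ j', I j') (b' j₁) = 0)} :=
        Nat.card_le_card_of_injective _ (Subtype.impEmbedding _ _ himp).injective
      -- independence over the residue field
      have hindk : ∀ a bb : R ⧸ (⨅ j, I j),
          (∀ i, a * Ideal.Quotient.mk (⨅ j', I j') (W * ψ j₀ i)
              = bb * Ideal.Quotient.mk (⨅ j', I j') (W * ψ j₁ i)) → a = 0 ∧ bb = 0 := by
        intro a bb hab
        obtain ⟨u, hu⟩ := Ideal.Quotient.mk_surjective a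
        obtain ⟨v, hv⟩ := Ideal.Quotient.mk_surjective bb
        have hmem : ∀ i, (u * W) * ψ j₀ i - (v * W) * ψ j₁ i ∈ (⨅ j, I j) := by
          intro i
          have h1 := hab i
          rw [← hu, ← hv, ← map_mul, ← map_mul] at h1
          have h0 : Ideal.Quotient.mk (⨅ j', I j') (u * (W * ψ j₀ i) - v * (W * ψ j₁ i)) = 0 := by
            rw [map_sub, h1, sub_self]
          rw [Ideal.Quotient.eq_zero_iff_mem] at h0
          have heq : (u * W) * ψ j₀ i - (v * W) * ψ j₁ i
              = u * (W * ψ j₀ i) - v * (W * ψ j₁ i) := by ring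
          rwa [heq]
        obtain ⟨hu', hv'⟩ := hind j₀ j₁ hne' (u * W) (v * W) hmem
        have hu2 : u ∈ (⨅ j, I j) := (hp.mem_or_mem hu').resolve_right hWp
        have hv2 : v ∈ (⨅ j, I j) := (hp.mem_or_mem hv').resolve_right hWp
        constructor
        · rw [← hu, Ideal.Quotient.eq_zero_iff_mem]; exact hu2
        · rw [← hv, Ideal.Quotient.eq_zero_iff_mem]; exact hv2
      have hct := card_two (fun i => Ideal.Quotient.mk (⨅ j', I j') (W * ψ j₀ i))
        (fun i => Ideal.Quotient.mk (⨅ j', I j') (W * ψ j₁ i))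
        (Ideal.Quotient.mk (⨅ j', I j') (b' j₀)) (Ideal.Quotient.mk (⨅ j', I j') (b' j₁)) hindk
      rw [omegaGY]
      have hq : (0 : ℝ) < (Nat.card (R ⧸ (⨅ j, I j)) : ℝ) := by
        exact_mod_cast Nat.card_pos
      rw [div_le_div_iff₀ (by positivity) (by positivity), one_mul]
      have : (Nat.card {x : Fin m → R ⧸ (⨅ j, I j) // ∀ j : Fin s,
          Ideal.Quotient.factor (S := ⨅ j', I j') (T := I j) (iInf_le I j)
            ((∑ i, Ideal.Quotient.mk (⨅ j', I j') (W * ψ j i) * x i) +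
              Ideal.Quotient.mk (⨅ j', I j') (b' j)) = 0})
          * Nat.card (R ⧸ (⨅ j, I j)) ^ 2 ≤ Nat.card (R ⧸ (⨅ j, I j)) ^ m :=
        le_trans (Nat.mul_le_mul_right _ hcard) hct
      exact_mod_cast this
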